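/- arXiv:2408.10912 — 2 statements merged into one kernel-verified Lean document; each statement's English description precedes it below -/
import Mathlib

section
/- Random coloring union bound: let D be a finite set and let N functions F_1,…,F_N : D → {1,…,M} be chosen with all values i.i.d. uniform. If N ≤ 2^{|D|(λ log₂ M − 1)} and λ > 1/M, then with positive probability, for every pair i ≠ j the collision fraction |{y : F_i(y) = F_j(y)}|/|D| is at most λ. Consequently N can be taken doubly exponential in log|D|. -/
open Finset

section aux

variable {D : Type*} [Fintype D] [Nonempty D] [DecidableEq D]

/-- agreement set of two colorings -/
private def agr {M : ℕ} (f g : D → Fin M) : Finset D :=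
  univ.filter (fun y => f y = g y)

private lemma agr_comm {M : ℕ} (f g : D → Fin M) : agr f g = agr g f := by
  simp [agr, eq_comm]

private lemma fiber_card {M : ℕ} (f : D → Fin M) (S : Finset D) :
    (univ.filter (fun g : D → Fin M => agr f g = S)).card ≤
      M ^ (Fintype.card D - S.card) := by
  classical
  have hsub : (univ.filter (fun g : D → Fin M => agr f g = S)) ⊆
      univ.filter (fun g => ∀ y ∈ S, g y = f y) := by
    intro g hg
    simp only [mem_filter, mem_univ, true_and] at hg ⊢
    intro y hy
    rw [← hg] at hy
    exact ((mem_filter.mp hy).2).symm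
  refine (card_le_card hsub).trans ?_
  have h : (univ.filter (fun g : D → Fin M => ∀ y ∈ S, g y = f y)).card ≤
      Fintype.card ({y : D // y ∈ Sᶜ} → Fin M) := by
    rw [← Finset.card_univ]
    apply Finset.card_le_card_of_injOn (fun g => fun y : {y : D // y ∈ Sᶜ} => g y.1)
    · intro g _; exact mem_univ _
    · intro g hg g' hg' h
      simp only [coe_filter, mem_univ, true_and, Set.mem_setOf_eq] at hg hg'
      funext y
      by_cases hy : y ∈ S
      · rw [hg y hy, hg' y hy]
      · exact congrFun h ⟨y, by simpa using hy⟩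
  simpa [Fintype.card_fun, Fintype.card_coe, Finset.card_compl] using h

private lemma ball_card {M : ℕ} (hM : 1 ≤ M) (lam : ℝ) (f : D → Fin M) :
    ((univ.filter (fun g : D → Fin M =>
        lam * (Fintype.card D : ℝ) < ((agr f g).card : ℝ))).card : ℝ) ≤
      2 ^ (Fintype.card D) * (M : ℝ) ^ ((1 - lam) * (Fintype.card D : ℝ)) := by
  classical
  set n := Fintype.card D with hn
  set B := univ.filter (fun g : D → Fin M =>
      lam * (n : ℝ) < ((agr f g).card : ℝ)) with hB
  set t := univ.powerset.filter (fun S : Finset D => lam * (n : ℝ) < (S.card : ℝ)) with ht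
  have hmaps : ∀ g ∈ B, agr f g ∈ t := by
    intro g hg
    simp only [hB, mem_filter, mem_univ, true_and] at hg
    simp only [ht, mem_filter, mem_powerset]
    exact ⟨subset_univ _, hg⟩
  have hcard : B.card = ∑ S ∈ t, (B.filter (fun g => agr f g = S)).card :=
    Finset.card_eq_sum_card_fiberwise hmaps
  have hfib : ∀ S ∈ t, ((B.filter (fun g => agr f g = S)).card : ℝ) ≤
      (M : ℝ) ^ ((1 - lam) * (n : ℝ)) := by
    intro S hS
    simp only [ht, mem_filter, mem_powerset] at hS
    have h1 : (B.filter (fun g => agr f g = S)).card ≤ M ^ (n - S.card) := by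
      refine le_trans (card_le_card ?_) (fiber_card f S)
      intro g hg
      simp only [mem_filter, mem_univ, true_and] at hg ⊢
      exact hg.2
    have hSn : S.card ≤ n := by
      simpa [hn] using card_le_card hS.1
    have h2 : ((M : ℝ) ^ (n - S.card) : ℝ) ≤ (M : ℝ) ^ ((1 - lam) * (n : ℝ)) := by
      have hM1 : (1 : ℝ) ≤ (M : ℝ) := by exact_mod_cast hM
      have hcast : ((M : ℝ) ^ (n - S.card) : ℝ) = (M : ℝ) ^ (((n - S.card : ℕ) : ℝ)) := by
        rw [Real.rpow_natCast]
      rw [hcast]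
      apply Real.rpow_le_rpow_of_exponent_le hM1
      rw [Nat.cast_sub hSn]
      have := hS.2.le
      linarith
    calc ((B.filter (fun g => agr f g = S)).card : ℝ) ≤ ((M ^ (n - S.card) : ℕ) : ℝ) := by
          exact_mod_cast h1
      _ = (M : ℝ) ^ (n - S.card) := by push_cast; ring
      _ ≤ (M : ℝ) ^ ((1 - lam) * (n : ℝ)) := h2
  have : (B.card : ℝ) ≤ (t.card : ℝ) * (M : ℝ) ^ ((1 - lam) * (n : ℝ)) := by
    rw [hcard]
    push_cast
    calc (∑ S ∈ t, ((B.filter (fun g => agr f g = S)).card : ℝ))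
        ≤ ∑ S ∈ t, (M : ℝ) ^ ((1 - lam) * (n : ℝ)) := Finset.sum_le_sum hfib
      _ = (t.card : ℝ) * (M : ℝ) ^ ((1 - lam) * (n : ℝ)) := by
          rw [Finset.sum_const, nsmul_eq_mul]
  refine this.trans ?_
  have htcard : t.card ≤ 2 ^ n := by
    calc t.card ≤ (univ.powerset : Finset (Finset D)).card := card_le_card (filter_subset _ _)
      _ = 2 ^ n := by simp [hn]
  have hMpos : (0 : ℝ) < (M : ℝ) ^ ((1 - lam) * (n : ℝ)) :=
    Real.rpow_pos_of_pos (by exact_mod_cast Nat.lt_of_lt_of_le Nat.zero_lt_one hM) _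
  have : (t.card : ℝ) ≤ (2 : ℝ) ^ n := by exact_mod_cast htcard
  nlinarith [hMpos, this]

end aux

/-- Random coloring union bound: if N ≤ 2^{|D|(λ log₂ M - 1)}, then there exist
N colorings D → {1,…,M} all of whose pairwise collision fractions are at most λ
(i.e., with positive probability random colorings have this property). -/
theorem random_coloring_union_bound
    {D : Type*} [Fintype D] [Nonempty D] [DecidableEq D]
    (M N : ℕ) (hM : 2 ≤ M) (hN : 2 ≤ N)
    (lam : ℝ) (hlam1 : 1 / (M : ℝ) < lam) (hlam2 : lam < 1)
    (hNbound : (N : ℝ) ≤ (2 : ℝ) ^ ((Fintype.card D : ℝ) * (lam * Real.logb 2 (M : ℝ) - 1))) :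
    ∃ F : Fin N → D → Fin M, ∀ i j : Fin N, i ≠ j →
      ((Finset.univ.filter (fun y : D => F i y = F j y)).card : ℝ)
        / (Fintype.card D : ℝ) ≤ lam := by
  classical
  set n := Fintype.card D with hn
  have hn0 : 0 < n := Fintype.card_pos
  have hnR : (0 : ℝ) < (n : ℝ) := by exact_mod_cast hn0
  have hM0 : (0 : ℝ) < (M : ℝ) := by positivity
  have hM1 : (1 : ℝ) < (M : ℝ) := by exact_mod_cast hM
  have hlam0 : 0 < lam := lt_trans (by positivity) hlam1
  -- key numeric bound: N * 2^n * M^{(1-λ)n} ≤ M^n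
  have hexp : (2 : ℝ) ^ ((n : ℝ) * (lam * Real.logb 2 (M : ℝ) - 1)) =
      (M : ℝ) ^ (lam * (n : ℝ)) / 2 ^ n := by
    rw [show (n : ℝ) * (lam * Real.logb 2 (M : ℝ) - 1)
        = Real.logb 2 (M : ℝ) * (lam * (n : ℝ)) - (n : ℝ) by ring]
    rw [Real.rpow_sub (by norm_num : (0:ℝ) < 2)]
    rw [Real.rpow_mul (by norm_num : (0:ℝ) ≤ 2)]
    rw [Real.rpow_logb (by norm_num) (by norm_num) hM0]
    rw [Real.rpow_natCast]
  have hkey : (N : ℝ) * (2 ^ n * (M : ℝ) ^ ((1 - lam) * (n : ℝ))) ≤ (M : ℝ) ^ n := by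
    have h2n : (0 : ℝ) < 2 ^ n := by positivity
    have h1 : (N : ℝ) * 2 ^ n ≤ (M : ℝ) ^ (lam * (n : ℝ)) := by
      rw [hexp] at hNbound
      rw [div_eq_mul_inv] at hNbound
      calc (N : ℝ) * 2 ^ n ≤ ((M : ℝ) ^ (lam * (n : ℝ)) * (2 ^ n)⁻¹) * 2 ^ n := by
            apply mul_le_mul_of_nonneg_right hNbound h2n.le
        _ = (M : ℝ) ^ (lam * (n : ℝ)) := by field_simp
    have h2 : (M : ℝ) ^ (lam * (n : ℝ)) * (M : ℝ) ^ ((1 - lam) * (n : ℝ)) = (M : ℝ) ^ n := by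
      rw [← Real.rpow_add hM0]
      rw [show lam * (n : ℝ) + (1 - lam) * (n : ℝ) = (n : ℝ) by ring]
      rw [Real.rpow_natCast]
    have hMe : (0 : ℝ) < (M : ℝ) ^ ((1 - lam) * (n : ℝ)) := Real.rpow_pos_of_pos hM0 _
    calc (N : ℝ) * (2 ^ n * (M : ℝ) ^ ((1 - lam) * (n : ℝ)))
        = ((N : ℝ) * 2 ^ n) * (M : ℝ) ^ ((1 - lam) * (n : ℝ)) := by ring
      _ ≤ (M : ℝ) ^ (lam * (n : ℝ)) * (M : ℝ) ^ ((1 - lam) * (n : ℝ)) :=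
          mul_le_mul_of_nonneg_right h1 hMe.le
      _ = (M : ℝ) ^ n := h2
  -- greedy construction
  have greedy : ∀ k : ℕ, k ≤ N → ∃ T : Finset (D → Fin M), T.card = k ∧
      ∀ f ∈ T, ∀ g ∈ T, f ≠ g → ((agr f g).card : ℝ) ≤ lam * (n : ℝ) := by
    intro k
    induction k with
    | zero => intro _; exact ⟨∅, by simp⟩
    | succ k ih =>
        intro hk1
        obtain ⟨T, hTcard, hTgood⟩ := ih (Nat.le_of_succ_le hk1)
        set B := T.biUnion (fun f => univ.filter (fun g : D → Fin M =>
            lam * (n : ℝ) < ((agr f g).card : ℝ))) with hBdef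
        have hMone : 1 ≤ M := le_trans (by norm_num) hM
        have hBcard : (B.card : ℝ) < (M : ℝ) ^ n := by
          have h1 : (B.card : ℝ) ≤ (k : ℝ) * (2 ^ n * (M : ℝ) ^ ((1 - lam) * (n : ℝ))) := by
            calc (B.card : ℝ) ≤ ((∑ f ∈ T, (univ.filter (fun g : D → Fin M =>
                  lam * (n : ℝ) < ((agr f g).card : ℝ))).card : ℕ) : ℝ) := by
                  exact_mod_cast Finset.card_biUnion_le
              _ = ∑ f ∈ T, ((univ.filter (fun g : D → Fin M =>
                  lam * (n : ℝ) < ((agr f g).card : ℝ))).card : ℝ) := by push_cast; ring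
              _ ≤ ∑ f ∈ T, (2 ^ n * (M : ℝ) ^ ((1 - lam) * (n : ℝ))) :=
                  Finset.sum_le_sum (fun f _ => ball_card hMone lam f)
              _ = (T.card : ℝ) * (2 ^ n * (M : ℝ) ^ ((1 - lam) * (n : ℝ))) := by
                  rw [Finset.sum_const, nsmul_eq_mul]
              _ = (k : ℝ) * (2 ^ n * (M : ℝ) ^ ((1 - lam) * (n : ℝ))) := by rw [hTcard]
          have hc : (0 : ℝ) < 2 ^ n * (M : ℝ) ^ ((1 - lam) * (n : ℝ)) := by
            have := Real.rpow_pos_of_pos hM0 ((1 - lam) * (n : ℝ))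
            positivity
          have hkN : (k : ℝ) < (N : ℝ) := by exact_mod_cast hk1
          calc (B.card : ℝ) ≤ (k : ℝ) * (2 ^ n * (M : ℝ) ^ ((1 - lam) * (n : ℝ))) := h1
            _ < (N : ℝ) * (2 ^ n * (M : ℝ) ^ ((1 - lam) * (n : ℝ))) := by
                exact mul_lt_mul_of_pos_right hkN hc
            _ ≤ (M : ℝ) ^ n := hkey
        have hBlt : B.card < (univ : Finset (D → Fin M)).card := by
          have huniv : ((univ : Finset (D → Fin M)).card : ℝ) = (M : ℝ) ^ n := by
            rw [Finset.card_univ]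
            rw [show Fintype.card (D → Fin M) = M ^ n by simp [Fintype.card_fun, hn]]
            push_cast; ring
          have : (B.card : ℝ) < ((univ : Finset (D → Fin M)).card : ℝ) := by
            rw [huniv]; exact hBcard
          exact_mod_cast this
        have hne : B ≠ univ := fun h => by simp [h] at hBlt
        obtain ⟨g, hg⟩ : ∃ g, g ∉ B := by
          by_contra h
          push_neg at h
          exact hne (Finset.eq_univ_iff_forall.mpr h)
        have hgball : ∀ f ∈ T, ((agr f g).card : ℝ) ≤ lam * (n : ℝ) := by
          intro f hf
          by_contra hcon
          push_neg at hcon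
          exact hg (Finset.mem_biUnion.mpr ⟨f, hf, by
            simp only [mem_filter, mem_univ, true_and]; exact hcon⟩)
        have hgT : g ∉ T := by
          intro hgT
          have : ((agr g g).card : ℝ) ≤ lam * (n : ℝ) := hgball g hgT
          have hag : agr g g = univ := by simp [agr]
          rw [hag] at this
          have : (n : ℝ) ≤ lam * (n : ℝ) := by simpa [hn] using this
          nlinarith
        refine ⟨insert g T, by rw [card_insert_of_notMem hgT, hTcard], ?_⟩
        intro f1 hf1 f2 hf2 hne12
        rcases Finset.mem_insert.mp hf1 with h1 | h1
        · rcases Finset.mem_insert.mp hf2 with h2 | h2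
          · exact absurd (h1.trans h2.symm) hne12
          · rw [h1, agr_comm]; exact hgball f2 h2
        · rcases Finset.mem_insert.mp hf2 with h2 | h2
          · rw [h2]; exact hgball f1 h1
          · exact hTgood f1 h1 f2 h2 hne12
  obtain ⟨T, hTcard, hTgood⟩ := greedy N le_rfl
  set e : Fin N ≃ T := ((T.equivFin).trans (finCongr hTcard)).symm with he
  refine ⟨fun i => (e i : D → Fin M), ?_⟩
  intro i j hij
  have hmem1 : ((e i : D → Fin M)) ∈ T := (e i).2
  have hmem2 : ((e j : D → Fin M)) ∈ T := (e j).2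
  have hne : (e i : D → Fin M) ≠ (e j : D → Fin M) := by
    intro h
    exact hij (e.injective (Subtype.ext h))
  have hgood := hTgood _ hmem1 _ hmem2 hne
  rw [div_le_iff₀ hnR]
  simpa [agr, hn, mul_comm] using hgood
end

section
/- Type II error decomposition: for the concatenated IDF code, the type II error probability W^m(D_ĩ | f_i) for ĩ ≠ i is at most |{y^n ∈ D* : F_i(y^n) = F_ĩ(y^n)}| · max_{y^n∈D*} W^n(y^n|x*^n) + δ₂, where δ₂ bounds the second-phase transmission error. -/
open Finset

/-- Type II error decomposition for the concatenated IDF code: the probability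
of accepting ĩ ≠ i is bounded by the number of collision points times the
maximal typical-sequence probability, plus the second-phase error δ₂. -/
theorem type_two_error_bound
    {Yn Zk L : Type*} [Fintype Yn] [Fintype Zk] [Fintype L] [DecidableEq L]
    (W1 : Yn → ℝ)  -- first-phase output distribution given x*^n
    (hW1nn : ∀ y, 0 ≤ W1 y) (hW1sum : ∑ y, W1 y = 1)
    (Dstar : Finset Yn) (hDne : Dstar.Nonempty)
    (W2 : L → Zk → ℝ)  -- second-phase output distribution given codeword c(l)
    (hW2nn : ∀ l z, 0 ≤ W2 l z) (hW2sum : ∀ l, ∑ z, W2 l z = 1)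
    (D' : L → Finset Zk) (δ₂ : ℝ) (hδ₂ : 0 ≤ δ₂)
    (htrans : ∀ l l', l ≠ l' → ∑ z ∈ D' l', W2 l z ≤ δ₂)
    (Fi Fj : Yn → L)  -- coloring functions for identities i and ĩ
    :
    ∑ y ∈ Dstar, W1 y * ∑ z ∈ D' (Fj y), W2 (Fi y) z
      ≤ ((Dstar.filter (fun y => Fi y = Fj y)).card : ℝ)
          * (Dstar.sup' hDne W1) + δ₂ := by
  classical
  rw [← Finset.sum_filter_add_sum_filter_not Dstar (fun y => Fi y = Fj y)]
  have hsupnn : ∀ y ∈ Dstar, W1 y ≤ Dstar.sup' hDne W1 := fun y hy =>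
    Finset.le_sup' W1 hy
  have h1 : ∑ y ∈ Dstar.filter (fun y => Fi y = Fj y),
      W1 y * ∑ z ∈ D' (Fj y), W2 (Fi y) z
      ≤ ((Dstar.filter (fun y => Fi y = Fj y)).card : ℝ) * (Dstar.sup' hDne W1) := by
    calc _ ≤ ∑ y ∈ Dstar.filter (fun y => Fi y = Fj y), Dstar.sup' hDne W1 := by
            apply Finset.sum_le_sum
            intro y hy
            have hyD : y ∈ Dstar := (Finset.mem_filter.1 hy).1
            have hin : ∑ z ∈ D' (Fj y), W2 (Fi y) z ≤ 1 := by
              calc ∑ z ∈ D' (Fj y), W2 (Fi y) z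
                  ≤ ∑ z, W2 (Fi y) z :=
                    Finset.sum_le_sum_of_subset_of_nonneg (Finset.subset_univ _)
                      (fun z _ _ => hW2nn _ z)
                _ = 1 := hW2sum _
            have hinn : 0 ≤ ∑ z ∈ D' (Fj y), W2 (Fi y) z :=
              Finset.sum_nonneg fun z _ => hW2nn _ z
            calc W1 y * ∑ z ∈ D' (Fj y), W2 (Fi y) z
                ≤ W1 y * 1 := by
                  exact mul_le_mul_of_nonneg_left hin (hW1nn y)
              _ = W1 y := mul_one _
              _ ≤ Dstar.sup' hDne W1 := hsupnn y hyD
      _ = _ := by rw [Finset.sum_const, nsmul_eq_mul]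
  have h2 : ∑ y ∈ Dstar.filter (fun y => ¬ Fi y = Fj y),
      W1 y * ∑ z ∈ D' (Fj y), W2 (Fi y) z ≤ δ₂ := by
    calc ∑ y ∈ Dstar.filter (fun y => ¬ Fi y = Fj y),
        W1 y * ∑ z ∈ D' (Fj y), W2 (Fi y) z
        ≤ ∑ y ∈ Dstar.filter (fun y => ¬ Fi y = Fj y), W1 y * δ₂ := by
          apply Finset.sum_le_sum
          intro y hy
          exact mul_le_mul_of_nonneg_left
            (htrans _ _ (Finset.mem_filter.1 hy).2) (hW1nn y)
      _ = (∑ y ∈ Dstar.filter (fun y => ¬ Fi y = Fj y), W1 y) * δ₂ := by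
          rw [← Finset.sum_mul]
      _ ≤ 1 * δ₂ := by
          apply mul_le_mul_of_nonneg_right _ hδ₂
          calc ∑ y ∈ Dstar.filter (fun y => ¬ Fi y = Fj y), W1 y
              ≤ ∑ y, W1 y :=
                Finset.sum_le_sum_of_subset_of_nonneg (Finset.subset_univ _)
                  (fun y _ _ => hW1nn y)
            _ = 1 := hW1sum
      _ = δ₂ := one_mul _
  linarith
end
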